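/- Let V be a finite type and let (u_1,v_1,Δ_1),…,(u_L,v_L,Δ_L) be a list of updates with u_j ≠ v_j and Δ_j ∈ ℤ for each j. Define symmetric zero-diagonal matrices A_0 ≡ 0 and, for j ≥ 1, let A_j agree with A_{j−1} except that A_j(u_j,v_j) = A_j(v_j,u_j) = A_{j−1}(u_j,v_j) + Δ_j. Then the triangle count of the final matrix satisfies T(A_L) = Σ_{j=1}^{L} Δ_j · Σ_{z ∈ V} A_{j−1}(u_j, z) · A_{j−1}(v_j, z). -/

import Mathlib

/-- The triangle count of a symmetric matrix `B` on a finite vertex type `V`: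
the sum over all unordered triples `{x,y,z}` of pairwise distinct vertices of
`B x y * B y z * B x z`, expressed as the sum over all 3-element subsets `s` of `V`
of the product of `B` over the three unordered pairs of distinct vertices in `s`. -/
def triCount {V : Type*} [Fintype V] [DecidableEq V]
    (B : V → V → ℤ) (hB : ∀ x y, B x y = B y x) : ℤ :=
  ∑ s ∈ (Finset.univ : Finset V).powersetCard 3,
    ∏ e ∈ s.sym2.filter (fun e => ¬ e.IsDiag), Sym2.lift ⟨B, hB⟩ e

/-- Apply a single turnstile update: add `Δ` to the multiplicity of the edge `{u,v}`. -/
def applyUpdate {V : Type*} [DecidableEq V]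
    (A : V → V → ℤ) (u v : V) (Δ : ℤ) : V → V → ℤ :=
  fun x y => if (x = u ∧ y = v) ∨ (x = v ∧ y = u) then A x y + Δ else A x y

/-- The multiplicity matrix `A_j` obtained after the first `j` updates of a
turnstile edge stream, starting from the all-zero matrix `A_0 ≡ 0`. -/
def matAfter {V : Type*} [DecidableEq V]
    (upds : List (V × V × ℤ)) (j : ℕ) : V → V → ℤ :=
  (upds.take j).foldl (fun A t => applyUpdate A t.1 t.2.1 t.2.2) 0

lemma sym2_triple {V : Type*} [DecidableEq V] {a b c : V} (hab : a ≠ b) (hac : a ≠ c) (hbc : b ≠ c) :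
    (({a,b,c} : Finset V).sym2).filter (fun e => ¬ e.IsDiag) = {s(a,b), s(a,c), s(b,c)} := by
  ext e
  induction e using Sym2.ind with
  | _ x y =>
    simp only [Finset.mem_filter, Finset.mk_mem_sym2_iff, Finset.mem_insert,
      Finset.mem_singleton, Sym2.isDiag_iff_proj_eq, Sym2.eq_iff]
    aesop

lemma prod_triple {V : Type*} [DecidableEq V] (f : Sym2 V → ℤ) {a b c : V} (hab : a ≠ b) (hac : a ≠ c) (hbc : b ≠ c) :
    ∏ e ∈ ({s(a,b), s(a,c), s(b,c)} : Finset (Sym2 V)), f e = f s(a,b) * (f s(a,c) * f s(b,c)) := by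
  rw [Finset.prod_insert (by simp [Sym2.eq_iff]; tauto),
    Finset.prod_insert (by simp [Sym2.eq_iff]; tauto), Finset.prod_singleton]

lemma triCount_update {V : Type*} [Fintype V] [DecidableEq V]
    (A : V → V → ℤ) (hA : ∀ x y, A x y = A y x) (hdiag : ∀ x, A x x = 0)
    (u v : V) (huv : u ≠ v) (Δ : ℤ)
    (hA' : ∀ x y, applyUpdate A u v Δ x y = applyUpdate A u v Δ y x) :
    triCount (applyUpdate A u v Δ) hA' = triCount A hA + Δ * ∑ z, A u z * A v z := by
  classical
  unfold triCount
  rw [← Finset.sum_filter_add_sum_filter_not _ (fun s => u ∈ s ∧ v ∈ s),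
      ← Finset.sum_filter_add_sum_filter_not ((Finset.univ : Finset V).powersetCard 3) (fun s => u ∈ s ∧ v ∈ s)
        (fun s => ∏ e ∈ s.sym2.filter (fun e => ¬ e.IsDiag), Sym2.lift ⟨A, hA⟩ e)]
  have hnotuv : ∀ s ∈ (Finset.univ : Finset V).powersetCard 3 |>.filter (fun s => ¬ (u ∈ s ∧ v ∈ s)),
      (∏ e ∈ s.sym2.filter (fun e => ¬ e.IsDiag), Sym2.lift ⟨applyUpdate A u v Δ, hA'⟩ e)
        = ∏ e ∈ s.sym2.filter (fun e => ¬ e.IsDiag), Sym2.lift ⟨A, hA⟩ e := by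
    intro s hs
    rw [Finset.mem_filter] at hs
    refine Finset.prod_congr rfl ?_
    intro e he
    induction e using Sym2.ind with
    | _ x y =>
      rw [Finset.mem_filter, Finset.mk_mem_sym2_iff] at he
      simp only [Sym2.lift_mk]
      unfold applyUpdate
      rw [if_neg]
      rintro (⟨rfl, rfl⟩ | ⟨rfl, rfl⟩)
      exacts [hs.2 ⟨he.1.1, he.1.2⟩, hs.2 ⟨he.1.2, he.1.1⟩]
  rw [Finset.sum_congr rfl hnotuv]
  have key : (∑ s ∈ ((Finset.univ : Finset V).powersetCard 3).filter (fun s => u ∈ s ∧ v ∈ s),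
      ∏ e ∈ s.sym2.filter (fun e => ¬ e.IsDiag), Sym2.lift ⟨applyUpdate A u v Δ, hA'⟩ e)
      = (∑ s ∈ ((Finset.univ : Finset V).powersetCard 3).filter (fun s => u ∈ s ∧ v ∈ s),
      ∏ e ∈ s.sym2.filter (fun e => ¬ e.IsDiag), Sym2.lift ⟨A, hA⟩ e) + Δ * ∑ z, A u z * A v z := by
    have hb : ∀ g : Finset V → ℤ,
        ∑ s ∈ ((Finset.univ : Finset V).powersetCard 3).filter (fun s => u ∈ s ∧ v ∈ s), g s
          = ∑ z ∈ (Finset.univ : Finset V) \ {u, v}, g {u, v, z} := by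
      intro g
      refine (Finset.sum_bij (fun z _ => ({u, v, z} : Finset V)) ?_ ?_ ?_ ?_).symm
      · intro z hz
        simp only [Finset.mem_sdiff, Finset.mem_insert, Finset.mem_singleton, not_or] at hz
        simp only [Finset.mem_filter, Finset.mem_powersetCard_univ, Finset.mem_insert,
          Finset.mem_singleton]
        refine ⟨?_, by simp, by simp⟩
        rw [Finset.card_insert_of_notMem (by simp [huv, Ne.symm hz.2.1]),
          Finset.card_insert_of_notMem (by simp [Ne.symm hz.2.2]), Finset.card_singleton]
      · intro z hz z' hz' h
        simp only [Finset.mem_sdiff, Finset.mem_insert, Finset.mem_singleton, not_or] at hz hz'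
        have h' : ({u, v, z} : Finset V) = {u, v, z'} := h
        have : z ∈ ({u, v, z'} : Finset V) := by rw [← h']; simp
        simp only [Finset.mem_insert, Finset.mem_singleton] at this
        tauto
      · intro s hs
        simp only [Finset.mem_filter, Finset.mem_powersetCard_univ] at hs
        have hsub : ({u, v} : Finset V) ⊆ s := by
          intro x hx
          simp only [Finset.mem_insert, Finset.mem_singleton] at hx
          rcases hx with rfl | rfl
          exacts [hs.2.1, hs.2.2]
        have hcard2 : ({u, v} : Finset V).card = 2 := by
          rw [Finset.card_insert_of_notMem (by simp [huv]), Finset.card_singleton]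
        have h1 : (s \ ({u, v} : Finset V)).card = 1 := by
          rw [Finset.card_sdiff_of_subset hsub, hcard2, hs.1]
        obtain ⟨z, hz⟩ := Finset.card_eq_one.mp h1
        have hzmem : z ∈ s \ ({u, v} : Finset V) := hz ▸ Finset.mem_singleton_self z
        refine ⟨z, Finset.mem_sdiff.mpr ⟨Finset.mem_univ z, (Finset.mem_sdiff.mp hzmem).2⟩, ?_⟩
        have := Finset.union_sdiff_of_subset hsub
        rw [hz] at this
        show ({u, v, z} : Finset V) = s
        rw [← this]
        ext x; simp [or_assoc]
      · intro z hz; rfl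
    rw [hb, hb]
    have huz : ∀ z ∈ (Finset.univ : Finset V) \ {u, v}, u ≠ z ∧ v ≠ z := by
      intro z hz
      simp only [Finset.mem_sdiff, Finset.mem_insert, Finset.mem_singleton, not_or] at hz
      exact ⟨Ne.symm hz.2.1, Ne.symm hz.2.2⟩
    have step : ∀ z ∈ (Finset.univ : Finset V) \ {u, v},
        (∏ e ∈ (({u, v, z} : Finset V).sym2).filter (fun e => ¬ e.IsDiag),
            Sym2.lift ⟨applyUpdate A u v Δ, hA'⟩ e)
          = (∏ e ∈ (({u, v, z} : Finset V).sym2).filter (fun e => ¬ e.IsDiag),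
            Sym2.lift ⟨A, hA⟩ e) + Δ * (A u z * A v z) := by
      intro z hz
      obtain ⟨h1, h2⟩ := huz z hz
      rw [sym2_triple huv h1 h2, prod_triple _ huv h1 h2, prod_triple _ huv h1 h2]
      simp only [Sym2.lift_mk]
      have e1 : applyUpdate A u v Δ u v = A u v + Δ := by simp [applyUpdate]
      have e2 : applyUpdate A u v Δ u z = A u z := by
        simp [applyUpdate, Ne.symm h2, huv]
      have e3 : applyUpdate A u v Δ v z = A v z := by
        simp [applyUpdate, Ne.symm h1, Ne.symm huv]
      rw [e1, e2, e3]; ring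
    rw [Finset.sum_congr rfl step, Finset.sum_add_distrib]
    congr 1
    rw [Finset.mul_sum]
    refine Finset.sum_subset (Finset.sdiff_subset) ?_
    intro z _ hz
    simp only [Finset.mem_sdiff, Finset.mem_univ, true_and, not_not, Finset.mem_insert,
      Finset.mem_singleton] at hz
    rcases hz with rfl | rfl
    · rw [hdiag]; ring
    · rw [hdiag]; ring
  rw [key]; ring

lemma matAfter_succ {V : Type*} [DecidableEq V] (upds : List (V × V × ℤ)) (j : ℕ)
    (h : j < upds.length) :
    matAfter upds (j + 1) = applyUpdate (matAfter upds j)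
      (upds.get ⟨j, h⟩).1 (upds.get ⟨j, h⟩).2.1 (upds.get ⟨j, h⟩).2.2 := by
  unfold matAfter
  rw [List.take_succ, List.foldl_append]
  simp [List.getElem?_eq_getElem h]

lemma matAfter_stab {V : Type*} [DecidableEq V] (upds : List (V × V × ℤ)) (j : ℕ)
    (h : upds.length ≤ j) : matAfter upds (j + 1) = matAfter upds j := by
  unfold matAfter
  rw [List.take_of_length_le h, List.take_of_length_le (le_trans h (Nat.le_succ j))]

lemma matAfter_diag {V : Type*} [DecidableEq V] (upds : List (V × V × ℤ))
    (hne : ∀ t ∈ upds, t.1 ≠ t.2.1) : ∀ j x, matAfter upds j x x = 0 := by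
  intro j
  induction j with
  | zero => intro x; rfl
  | succ n ih =>
    intro x
    by_cases h : n < upds.length
    · rw [matAfter_succ upds n h]
      unfold applyUpdate
      rw [if_neg, ih]
      have := hne _ (upds.get_mem ⟨n, h⟩)
      rintro (⟨rfl, h2⟩ | ⟨rfl, h2⟩)
      exacts [this h2, this h2.symm]
    · rw [matAfter_stab upds n (le_of_not_gt h), ih]

lemma triCount_congr {V : Type*} [Fintype V] [DecidableEq V]
    {B B' : V → V → ℤ} (h : B = B') (hB : ∀ x y, B x y = B y x) :
    triCount B hB = triCount B' (h ▸ hB) := by subst h; rfl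

lemma triCount_zero {V : Type*} [Fintype V] [DecidableEq V]
    (B : V → V → ℤ) (hB : ∀ x y, B x y = B y x) (h0 : ∀ x y, B x y = 0) :
    triCount B hB = 0 := by
  unfold triCount
  refine Finset.sum_eq_zero ?_
  intro s hs
  rw [Finset.mem_powersetCard_univ] at hs
  have : 1 < s.card := by omega
  obtain ⟨a, ha, b, hb, hab⟩ := Finset.one_lt_card.mp this
  refine Finset.prod_eq_zero (i := s(a, b)) ?_ ?_
  · simp [Finset.mem_filter, Finset.mk_mem_sym2_iff, ha, hb, hab]
  · simp [h0]

lemma aux_stream {V : Type*} [Fintype V] [DecidableEq V]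
    (upds : List (V × V × ℤ))
    (hne : ∀ t ∈ upds, t.1 ≠ t.2.1)
    (hsym : ∀ j : ℕ, ∀ x y, matAfter upds j x y = matAfter upds j y x) :
    ∀ n, n ≤ upds.length → triCount (matAfter upds n) (hsym n) =
      ∑ j ∈ Finset.range n, (if h : j < upds.length then
        (upds.get ⟨j, h⟩).2.2 * ∑ z : V, matAfter upds j (upds.get ⟨j, h⟩).1 z *
          matAfter upds j (upds.get ⟨j, h⟩).2.1 z else 0) := by
  intro n
  induction n with
  | zero =>
    intro _
    rw [Finset.sum_range_zero]
    exact triCount_zero _ _ (fun x y => rfl)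
  | succ n ih =>
    intro hle
    have hn : n < upds.length := hle
    have hstep := matAfter_succ upds n hn
    have hneq := hne _ (upds.get_mem ⟨n, hn⟩)
    rw [triCount_congr hstep (hsym (n + 1)),
      triCount_update (matAfter upds n) (hsym n) (matAfter_diag upds hne n) _ _ hneq _ _,
      ih (le_of_lt hn), Finset.sum_range_succ, dif_pos hn]

theorem triangle_count_stream {V : Type*} [Fintype V] [DecidableEq V]
    (upds : List (V × V × ℤ))
    (hne : ∀ t ∈ upds, t.1 ≠ t.2.1)
    (hsym : ∀ j : ℕ, ∀ x y, matAfter upds j x y = matAfter upds j y x) :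
    triCount (matAfter upds upds.length) (hsym upds.length) =
      ∑ j : Fin upds.length,
        (upds.get j).2.2 *
          ∑ z : V, matAfter upds j.val (upds.get j).1 z *
            matAfter upds j.val (upds.get j).2.1 z := by
  rw [aux_stream upds hne hsym upds.length le_rfl,
    ← Fin.sum_univ_eq_sum_range (fun j => if h : j < upds.length then
        (upds.get ⟨j, h⟩).2.2 * ∑ z : V, matAfter upds j (upds.get ⟨j, h⟩).1 z *
          matAfter upds j (upds.get ⟨j, h⟩).2.1 z else 0) upds.length]
  refine Finset.sum_congr rfl ?_
  intro j _
  rw [dif_pos j.isLt]
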